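/- In the quotient ring R = ℤ[c₁,c₂,c₃,c₄]/J, where J = ⟨c₁+c₂+c₃+c₄, c₁-c₃, c₂-c₃, c₁c₂c₃⟩, the quotient R/Ann_R(c₄) is a free ℤ-module of rank 2, where Ann_R(c₄) = {r ∈ R : r·c₄ = 0}. -/

import Mathlib

open MvPolynomial

/-- Stienstra's ideal `J = ⟨c₁+c₂+c₃+c₄, c₁-c₃, c₂-c₃, c₁c₂c₃⟩` in `ℤ[c₁,c₂,c₃,c₄]`. -/
noncomputable def stienstraJ : Ideal (MvPolynomial (Fin 4) ℤ) :=
  Ideal.span {X 0 + X 1 + X 2 + X 3, X 0 - X 2, X 1 - X 2, X 0 * X 1 * X 2}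

/-- The ring `R = ℤ[c₁,c₂,c₃,c₄]/J`. -/
noncomputable abbrev stienstraR := MvPolynomial (Fin 4) ℤ ⧸ stienstraJ

/-- The annihilator ideal of the class of `c₄` in `R`. -/
noncomputable def annC4 : Ideal stienstraR :=
  { carrier := {r : stienstraR | r * Ideal.Quotient.mk stienstraJ (X 3) = 0}
    add_mem' := by intro a b ha hb; simp only [Set.mem_setOf_eq] at *; rw [add_mul, ha, hb, add_zero]
    zero_mem' := by simp
    smul_mem' := by
      intro c a ha; simp only [Set.mem_setOf_eq, smul_eq_mul] at *
      rw [mul_assoc, ha, mul_zero] }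

namespace Stienstra13

lemma mem_annC4 {r : stienstraR} :
    r ∈ annC4 ↔ r * Ideal.Quotient.mk stienstraJ (X 3) = 0 := Iff.rfl

/-- Generator membership lemmas for `stienstraJ`. -/
lemma g1_mem : (X 0 + X 1 + X 2 + X 3 : MvPolynomial (Fin 4) ℤ) ∈ stienstraJ :=
  Ideal.subset_span (Set.mem_insert _ _)

lemma g2_mem : (X 0 - X 2 : MvPolynomial (Fin 4) ℤ) ∈ stienstraJ :=
  Ideal.subset_span (Set.mem_insert_of_mem _ (Set.mem_insert _ _))

lemma g3_mem : (X 1 - X 2 : MvPolynomial (Fin 4) ℤ) ∈ stienstraJ :=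
  Ideal.subset_span (Set.mem_insert_of_mem _ (Set.mem_insert_of_mem _ (Set.mem_insert _ _)))

lemma g4_mem : (X 0 * X 1 * X 2 : MvPolynomial (Fin 4) ℤ) ∈ stienstraJ :=
  Ideal.subset_span (Set.mem_insert_of_mem _ (Set.mem_insert_of_mem _
    (Set.mem_insert_of_mem _ rfl)))

noncomputable def mkJ : MvPolynomial (Fin 4) ℤ →+* stienstraR := Ideal.Quotient.mk stienstraJ

/-- the class of `c₁` -/
noncomputable def t : stienstraR := mkJ (X 0)

lemma hX0 : mkJ (X 0) = t := rfl

lemma hX1 : mkJ (X 1) = t := by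
  refine Ideal.Quotient.eq.mpr ?_
  have h : (X 1 - X 0 : MvPolynomial (Fin 4) ℤ) = (X 1 - X 2) - (X 0 - X 2) := by ring
  rw [h]; exact sub_mem g3_mem g2_mem

lemma hX2 : mkJ (X 2) = t := by
  refine Ideal.Quotient.eq.mpr ?_
  have h : (X 2 - X 0 : MvPolynomial (Fin 4) ℤ) = -(X 0 - X 2) := by ring
  rw [h]; exact neg_mem g2_mem

lemma hX3 : mkJ (X 3) = -3 * t := by
  have : (-3 : stienstraR) * t = mkJ (-3 * X 0) := by
    simp only [mkJ, map_mul, map_neg, map_ofNat]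
    rfl
  rw [this]
  refine Ideal.Quotient.eq.mpr ?_
  have h : (X 3 - (-3 * X 0) : MvPolynomial (Fin 4) ℤ) =
      (X 0 + X 1 + X 2 + X 3) + ((X 0 - X 2) - (X 1 - X 2)) + (X 0 - X 2) := by ring
  rw [h]; exact add_mem (add_mem g1_mem (sub_mem g2_mem g3_mem)) g2_mem

lemma ht3 : t ^ 3 = 0 := by
  rw [show t ^ 3 = mkJ (X 0 ^ 3) from (map_pow mkJ (X 0) 3).symm]
  refine Ideal.Quotient.eq_zero_iff_mem.mpr ?_
  have h : (X 0 ^ 3 : MvPolynomial (Fin 4) ℤ) =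
      X 0 * X 1 * X 2 + (X 0 * X 2) * ((X 0 - X 2) - (X 1 - X 2)) + X 0 ^ 2 * (X 0 - X 2) := by
    ring
  rw [h]
  exact add_mem (add_mem g4_mem (Ideal.mul_mem_left _ _ (sub_mem g2_mem g3_mem)))
    (Ideal.mul_mem_left _ _ g2_mem)

lemma mul_t_mem {x : stienstraR}
    (hx : x ∈ Submodule.span ℤ ({1, t, t ^ 2} : Set stienstraR)) :
    x * t ∈ Submodule.span ℤ ({1, t, t ^ 2} : Set stienstraR) := by
  induction hx using Submodule.span_induction with
  | mem y hy =>
    rcases hy with rfl | rfl | rfl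
    · rw [one_mul]
      exact Submodule.subset_span (Set.mem_insert_of_mem _ (Set.mem_insert _ _))
    · rw [← sq]
      exact Submodule.subset_span (Set.mem_insert_of_mem _ (Set.mem_insert_of_mem _ rfl))
    · have : t ^ 2 * t = t ^ 3 := by ring
      rw [this, ht3]; exact zero_mem _
  | zero => rw [zero_mul]; exact zero_mem _
  | add a b _ _ ha hb => rw [add_mul]; exact add_mem ha hb
  | smul a x _ hx => rw [smul_mul_assoc]; exact Submodule.smul_mem _ _ hx

lemma span_R (p : MvPolynomial (Fin 4) ℤ) :
    mkJ p ∈ Submodule.span ℤ ({1, t, t ^ 2} : Set stienstraR) := by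
  induction p using MvPolynomial.induction_on with
  | C a =>
    have : mkJ (C a) = a • (1 : stienstraR) := by
      rw [zsmul_eq_mul, mul_one]
      simp [mkJ]
    rw [this]
    exact Submodule.smul_mem _ _ (Submodule.subset_span (Set.mem_insert _ _))
  | add p q hp hq => rw [map_add]; exact add_mem hp hq
  | mul_X p i hp =>
    rw [map_mul]
    fin_cases i
    · show mkJ p * mkJ (X 0) ∈ _
      rw [hX0]; exact mul_t_mem hp
    · show mkJ p * mkJ (X 1) ∈ _
      rw [hX1]; exact mul_t_mem hp
    · show mkJ p * mkJ (X 2) ∈ _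
      rw [hX2]; exact mul_t_mem hp
    · show mkJ p * mkJ (X 3) ∈ _
      rw [hX3]
      have h : mkJ p * (-3 * t) = (-3 : ℤ) • (mkJ p * t) := by
        rw [zsmul_eq_mul]; push_cast; ring
      rw [h]
      exact Submodule.smul_mem _ _ (mul_t_mem hp)

lemma t2_mem_ann : t ^ 2 ∈ annC4 := by
  rw [mem_annC4]
  show t ^ 2 * mkJ (X 3) = 0
  rw [hX3]
  have : t ^ 2 * (-3 * t) = -3 * t ^ 3 := by ring
  rw [this, ht3, mul_zero]

open Polynomial in
noncomputable def vT : Fin 4 → AdjoinRoot ((X : ℤ[X]) ^ 2) :=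
  ![AdjoinRoot.root _, AdjoinRoot.root _, AdjoinRoot.root _, -3 * AdjoinRoot.root _]

open Polynomial in
noncomputable def vS : Fin 4 → AdjoinRoot ((X : ℤ[X]) ^ 3) :=
  ![AdjoinRoot.root _, AdjoinRoot.root _, AdjoinRoot.root _, -3 * AdjoinRoot.root _]

open Polynomial in
noncomputable def ψS : MvPolynomial (Fin 4) ℤ →ₐ[ℤ] AdjoinRoot ((X : ℤ[X]) ^ 3) :=
  MvPolynomial.aeval vS

open Polynomial in
noncomputable def ψT : MvPolynomial (Fin 4) ℤ →ₐ[ℤ] AdjoinRoot ((X : ℤ[X]) ^ 2) :=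
  MvPolynomial.aeval vT

open Polynomial in
lemma rootS_pow3 : (AdjoinRoot.root ((X : ℤ[X]) ^ 3)) ^ 3 = 0 := by
  rw [← AdjoinRoot.mk_X, ← map_pow, AdjoinRoot.mk_self]

open Polynomial in
lemma rootT_pow2 : (AdjoinRoot.root ((X : ℤ[X]) ^ 2)) ^ 2 = 0 := by
  rw [← AdjoinRoot.mk_X, ← map_pow, AdjoinRoot.mk_self]

open Polynomial in
lemma hJS : ∀ p ∈ stienstraJ, ψS p = 0 := by
  intro p hp
  rw [stienstraJ] at hp
  refine Submodule.span_induction ?_ ?_ ?_ ?_ hp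
  · rintro x hx
    rcases hx with rfl | rfl | rfl | rfl
    · simp only [map_add, ψS, MvPolynomial.aeval_X, vS, Matrix.cons_val_zero,
        Matrix.cons_val_one, Matrix.head_cons, Matrix.cons_val_two, Matrix.tail_cons,
        Matrix.cons_val_three]
      ring
    · simp only [map_sub, ψS, MvPolynomial.aeval_X, vS, Matrix.cons_val_zero,
        Matrix.cons_val_one, Matrix.head_cons, Matrix.cons_val_two, Matrix.tail_cons,
        Matrix.cons_val_three]
      ring
    · simp only [map_sub, ψS, MvPolynomial.aeval_X, vS, Matrix.cons_val_zero,
        Matrix.cons_val_one, Matrix.head_cons, Matrix.cons_val_two, Matrix.tail_cons,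
        Matrix.cons_val_three]
      ring
    · simp only [map_mul, ψS, MvPolynomial.aeval_X, vS, Matrix.cons_val_zero,
        Matrix.cons_val_one, Matrix.head_cons, Matrix.cons_val_two, Matrix.tail_cons,
        Matrix.cons_val_three]
      rw [show ∀ y : AdjoinRoot ((X : Polynomial ℤ) ^ 3), y * y * y = y ^ 3 from fun y => by ring]
      exact rootS_pow3
  · exact map_zero _
  · intro a b _ _ ha hb; rw [map_add, ha, hb, add_zero]
  · intro a x _ hx; rw [smul_eq_mul, map_mul, hx, mul_zero]

open Polynomial in
lemma rootT_pow3 : (AdjoinRoot.root ((X : ℤ[X]) ^ 2)) ^ 3 = 0 := by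
  have h : (AdjoinRoot.root ((X : ℤ[X]) ^ 2)) ^ 3
      = (AdjoinRoot.root ((X : ℤ[X]) ^ 2)) ^ 2 * AdjoinRoot.root ((X : ℤ[X]) ^ 2) := by ring
  rw [h, rootT_pow2, zero_mul]

open Polynomial in
lemma hJT : ∀ p ∈ stienstraJ, ψT p = 0 := by
  intro p hp
  rw [stienstraJ] at hp
  refine Submodule.span_induction ?_ ?_ ?_ ?_ hp
  · rintro x hx
    rcases hx with rfl | rfl | rfl | rfl
    · simp only [map_add, ψT, MvPolynomial.aeval_X, vT, Matrix.cons_val_zero,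
        Matrix.cons_val_one, Matrix.head_cons, Matrix.cons_val_two, Matrix.tail_cons,
        Matrix.cons_val_three]
      ring
    · simp only [map_sub, ψT, MvPolynomial.aeval_X, vT, Matrix.cons_val_zero,
        Matrix.cons_val_one, Matrix.head_cons, Matrix.cons_val_two, Matrix.tail_cons,
        Matrix.cons_val_three]
      ring
    · simp only [map_sub, ψT, MvPolynomial.aeval_X, vT, Matrix.cons_val_zero,
        Matrix.cons_val_one, Matrix.head_cons, Matrix.cons_val_two, Matrix.tail_cons,
        Matrix.cons_val_three]
      ring
    · simp only [map_mul, ψT, MvPolynomial.aeval_X, vT, Matrix.cons_val_zero,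
        Matrix.cons_val_one, Matrix.head_cons, Matrix.cons_val_two, Matrix.tail_cons,
        Matrix.cons_val_three]
      rw [show ∀ y : AdjoinRoot ((X : Polynomial ℤ) ^ 2), y * y * y = y ^ 3 from fun y => by ring]
      exact rootT_pow3
  · exact map_zero _
  · intro a b _ _ ha hb; rw [map_add, ha, hb, add_zero]
  · intro a x _ hx; rw [smul_eq_mul, map_mul, hx, mul_zero]

open Polynomial in
noncomputable def fT : stienstraR →+* AdjoinRoot ((X : ℤ[X]) ^ 2) :=
  Ideal.Quotient.lift stienstraJ ψT.toRingHom hJT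

open Polynomial in
/-- the projection `S = ℤ[x]/(x³) → T = ℤ[x]/(x²)`. -/
noncomputable def projST : AdjoinRoot ((X : ℤ[X]) ^ 3) →ₐ[ℤ] AdjoinRoot ((X : ℤ[X]) ^ 2) :=
  AdjoinRoot.liftAlgHom _ (Algebra.ofId ℤ _) (AdjoinRoot.root _) (by
    rw [Polynomial.eval₂_X_pow]
    exact rootT_pow3)

open Polynomial in
lemma projST_mk (q : ℤ[X]) :
    projST (AdjoinRoot.mk ((X : ℤ[X]) ^ 3) q) = AdjoinRoot.mk ((X : ℤ[X]) ^ 2) q := by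
  rw [projST, AdjoinRoot.liftAlgHom_mk]; exact AdjoinRoot.aeval_eq q

open Polynomial in
lemma psiS_X0 : ψS (X 0) = AdjoinRoot.root ((Polynomial.X : ℤ[X]) ^ 3) := by
  simp only [ψS, MvPolynomial.aeval_X, vS, Matrix.cons_val_zero]

open Polynomial in
lemma psiS_X1 : ψS (X 1) = AdjoinRoot.root ((Polynomial.X : ℤ[X]) ^ 3) := by
  simp only [ψS, MvPolynomial.aeval_X, vS, Matrix.cons_val_one, Matrix.head_cons, Matrix.cons_val_zero]

open Polynomial in
lemma psiS_X2 : ψS (X 2) = AdjoinRoot.root ((Polynomial.X : ℤ[X]) ^ 3) := by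
  simp only [ψS, MvPolynomial.aeval_X, vS, Matrix.cons_val_two, Matrix.tail_cons,
    Matrix.head_cons]

open Polynomial in
lemma psiS_X3 : ψS (X 3) = -3 * AdjoinRoot.root ((Polynomial.X : ℤ[X]) ^ 3) := by
  simp only [ψS, MvPolynomial.aeval_X, vS, Matrix.cons_val_three, Matrix.tail_cons,
    Matrix.head_cons]

open Polynomial in
lemma psiT_X0 : ψT (X 0) = AdjoinRoot.root ((Polynomial.X : ℤ[X]) ^ 2) := by
  simp only [ψT, MvPolynomial.aeval_X, vT, Matrix.cons_val_zero]

open Polynomial in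
lemma psiT_X1 : ψT (X 1) = AdjoinRoot.root ((Polynomial.X : ℤ[X]) ^ 2) := by
  simp only [ψT, MvPolynomial.aeval_X, vT, Matrix.cons_val_one, Matrix.head_cons, Matrix.cons_val_zero]

open Polynomial in
lemma psiT_X2 : ψT (X 2) = AdjoinRoot.root ((Polynomial.X : ℤ[X]) ^ 2) := by
  simp only [ψT, MvPolynomial.aeval_X, vT, Matrix.cons_val_two, Matrix.tail_cons,
    Matrix.head_cons]

open Polynomial in
lemma psiT_X3 : ψT (X 3) = -3 * AdjoinRoot.root ((Polynomial.X : ℤ[X]) ^ 2) := by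
  simp only [ψT, MvPolynomial.aeval_X, vT, Matrix.cons_val_three, Matrix.tail_cons,
    Matrix.head_cons]

open Polynomial in
lemma projST_root :
    projST (AdjoinRoot.root ((Polynomial.X : ℤ[X]) ^ 3))
      = AdjoinRoot.root ((Polynomial.X : ℤ[X]) ^ 2) := by
  rw [projST, AdjoinRoot.liftAlgHom_root]

open Polynomial in
lemma projST_psi (p : MvPolynomial (Fin 4) ℤ) : projST (ψS p) = ψT p := by
  have h : projST.comp ψS = ψT := by
    apply MvPolynomial.algHom_ext
    intro i
    fin_cases i
    · show projST (ψS (X 0)) = ψT (X 0)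
      rw [psiS_X0, psiT_X0, projST_root]
    · show projST (ψS (X 1)) = ψT (X 1)
      rw [psiS_X1, psiT_X1, projST_root]
    · show projST (ψS (X 2)) = ψT (X 2)
      rw [psiS_X2, psiT_X2, projST_root]
    · show projST (ψS (X 3)) = ψT (X 3)
      rw [psiS_X3, psiT_X3, map_mul, map_neg, map_ofNat, projST_root]
  exact congrFun (congrArg DFunLike.coe h) p

open Polynomial in
lemma ann_le_ker : ∀ r ∈ annC4, fT r = 0 := by
  intro r hr
  obtain ⟨p, rfl⟩ := Ideal.Quotient.mk_surjective r
  rw [mem_annC4] at hr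
  have hmem : p * X 3 ∈ stienstraJ := by
    rw [← Ideal.Quotient.eq_zero_iff_mem, map_mul]
    exact hr
  have h0 : ψS (p * X 3) = 0 := hJS _ hmem
  rw [map_mul] at h0
  rw [psiS_X3] at h0
  obtain ⟨q, hq⟩ := AdjoinRoot.mk_surjective (ψS p)
  have hC3 : (Polynomial.C (-3 : ℤ) : ℤ[X]) = -3 := by rw [map_neg, map_ofNat]
  have hz : AdjoinRoot.mk ((Polynomial.X : ℤ[X]) ^ 3)
      (Polynomial.C (-3) * (q * Polynomial.X)) = 0 := by
    rw [map_mul, map_mul, AdjoinRoot.mk_X, hC3, map_neg, map_ofNat, hq, ← h0]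
    ring
  have hdvd : (Polynomial.X : ℤ[X]) ^ 3 ∣ Polynomial.C (-3) * (q * Polynomial.X) :=
    AdjoinRoot.mk_eq_zero.mp hz
  rw [Polynomial.X_pow_dvd_iff] at hdvd
  have h1 := hdvd 1 (by norm_num)
  have h2 := hdvd 2 (by norm_num)
  rw [Polynomial.coeff_C_mul, show (1 : ℕ) = 0 + 1 from rfl, Polynomial.coeff_mul_X] at h1
  rw [Polynomial.coeff_C_mul, show (2 : ℕ) = 1 + 1 from rfl, Polynomial.coeff_mul_X] at h2
  have hc0 : q.coeff 0 = 0 := by omega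
  have hc1 : q.coeff 1 = 0 := by omega
  have hdvd2 : (Polynomial.X : ℤ[X]) ^ 2 ∣ q := by
    rw [Polynomial.X_pow_dvd_iff]
    intro d hd
    interval_cases d
    · exact hc0
    · exact hc1
  have : fT (Ideal.Quotient.mk stienstraJ p) = ψT p := rfl
  rw [this, ← projST_psi, ← hq, projST_mk]
  exact AdjoinRoot.mk_eq_zero.mpr hdvd2

open Polynomial in
lemma psiT_surjective : Function.Surjective ψT := by
  intro y
  obtain ⟨q, rfl⟩ := AdjoinRoot.mk_surjective y
  refine ⟨Polynomial.aeval (X 0 : MvPolynomial (Fin 4) ℤ) q, ?_⟩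
  rw [← Polynomial.aeval_algHom_apply, psiT_X0, AdjoinRoot.aeval_eq]

open Polynomial in
noncomputable def G : (stienstraR ⧸ annC4) →+* AdjoinRoot ((X : ℤ[X]) ^ 2) :=
  Ideal.Quotient.lift annC4 fT ann_le_ker

open Polynomial in
lemma G_surjective : Function.Surjective G := by
  intro y
  obtain ⟨p, hp⟩ := psiT_surjective y
  exact ⟨Ideal.Quotient.mk annC4 (Ideal.Quotient.mk stienstraJ p), hp⟩

noncomputable def u : stienstraR →+* (stienstraR ⧸ annC4) := Ideal.Quotient.mk annC4

set_option synthInstance.maxHeartbeats 1000000 in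
lemma span_M (m : stienstraR ⧸ annC4) :
    m ∈ Submodule.span ℤ ({1, u t} : Set (stienstraR ⧸ annC4)) := by
  obtain ⟨r, rfl⟩ := Ideal.Quotient.mk_surjective m
  obtain ⟨p, rfl⟩ := Ideal.Quotient.mk_surjective r
  have hr := span_R p
  set sp := Submodule.span ℤ ({1, u t} : Set (stienstraR ⧸ annC4)) with hsp
  show u (mkJ p) ∈ sp
  refine Submodule.span_induction (p := fun x _ => u x ∈ sp) ?_ ?_ ?_ ?_ hr
  · rintro y (rfl | rfl | rfl)
    · show u 1 ∈ sp
      rw [map_one]; exact Submodule.subset_span (Set.mem_insert _ _)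
    · exact Submodule.subset_span (Set.mem_insert_of_mem _ rfl)
    · rw [show u (t ^ 2) = 0 from Ideal.Quotient.eq_zero_iff_mem.mpr t2_mem_ann]
      exact zero_mem _
  · show u 0 ∈ sp
    rw [map_zero]; exact zero_mem _
  · intro a b _ _ ha hb
    show u (a + b) ∈ sp
    rw [map_add]; exact add_mem ha hb
  · intro a x _ hx
    show u (a • x) ∈ sp
    rw [map_zsmul]; exact Submodule.smul_mem _ _ hx

noncomputable def pi' : (Fin 2 → ℤ) →ₗ[ℤ] (stienstraR ⧸ annC4) where
  toFun v := v 0 • (1 : stienstraR ⧸ annC4) + v 1 • u t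
  map_add' a b := by
    simp only [Pi.add_apply, add_smul]
    abel
  map_smul' a v := by
    simp only [Pi.smul_apply, smul_eq_mul, RingHom.id_apply, mul_smul, smul_add]

lemma pi'_surjective : Function.Surjective pi' := by
  intro m
  have := span_M m
  rw [Submodule.mem_span_pair] at this
  obtain ⟨a, b, h⟩ := this
  refine ⟨![a, b], ?_⟩
  simpa [pi'] using h

open Polynomial in
noncomputable def basisT : Module.Basis (Fin 2) ℤ (AdjoinRoot ((X : ℤ[X]) ^ 2)) :=
  ((AdjoinRoot.powerBasis' (Polynomial.monic_X_pow 2)).basis).reindex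
    (finCongr (by simp [AdjoinRoot.powerBasis'] ))

open Polynomial in
noncomputable def Lmap : (stienstraR ⧸ annC4) →ₗ[ℤ] AdjoinRoot ((X : ℤ[X]) ^ 2) :=
  G.toIntAlgHom.toLinearMap

lemma pi'_injective : Function.Injective pi' := by
  set E : (Fin 2 → ℤ) →ₗ[ℤ] (Fin 2 → ℤ) :=
    basisT.equivFun.toLinearMap ∘ₗ (Lmap ∘ₗ pi') with hE
  have hEsurj : Function.Surjective E := by
    apply Function.Surjective.comp basisT.equivFun.surjective
    rw [LinearMap.coe_comp, show ⇑Lmap = ⇑G from rfl]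
    exact Function.Surjective.comp G_surjective pi'_surjective
  have hEinj : Function.Injective E :=
    IsNoetherian.injective_of_surjective_endomorphism E hEsurj
  intro a b hab
  apply hEinj
  simp only [hE, LinearMap.coe_comp, Function.comp_apply, hab]

end Stienstra13

/-- `R/Ann_R(c₄)` is a free `ℤ`-module of rank `2`. -/
theorem stmt_13 : Nonempty (Module.Basis (Fin 2) ℤ (stienstraR ⧸ annC4)) := by
  exact ⟨(Pi.basisFun ℤ (Fin 2)).map
    (LinearEquiv.ofBijective Stienstra13.pi' ⟨Stienstra13.pi'_injective,
      Stienstra13.pi'_surjective⟩)⟩
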